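/- Under assumptions: g convex real-valued, M symmetric with M − αAᵀA positive semidefinite, and existence of a primal solution x⋆ together with a dual certificate u⋆ for x⋆ — for any initialization (x⁰, u⁰) ∈ ℝⁿ × ℝᵐ, the NCS iterates converge: there exist a primal solution x̄ and a dual certificate ū for x̄ such that x^k → x̄ and u^k → ū as k → ∞. -/

import Mathlib

open Matrix Filter Topology

-- Moore–Penrose pseudoinverse, characterized by the four Penrose conditions
-- (which determine it uniquely when a solution exists).
open Classical in
noncomputable def mpInv {k l : ℕ} (A : Matrix (Fin k) (Fin l) ℝ) : Matrix (Fin l) (Fin k) ℝ :=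
  if h : ∃ X : Matrix (Fin l) (Fin k) ℝ,
      A * X * A = A ∧ X * A * X = X ∧ (A * X)ᵀ = A * X ∧ (X * A)ᵀ = X * A
  then h.choose else 0

/-- `ProxRel g α z u'` says that `u' = prox_{αg*}(z)`, i.e. that
`α⁻¹ (z - u')` is a minimizer of `x ↦ g(x) + (α/2)‖x - z/α‖²`
(by Moreau's identity `prox_{αg*}(z) = z - α argmin_x {g(x) + (α/2)‖x - z/α‖²}`). -/
def ProxRel {m : ℕ} (g : (Fin m → ℝ) → ℝ) (α : ℝ) (z u' : Fin m → ℝ) : Prop :=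
  IsMinOn (fun y : Fin m → ℝ => g y + (α / 2) * ((y - α⁻¹ • z) ⬝ᵥ (y - α⁻¹ • z)))
    Set.univ (α⁻¹ • (z - u'))




lemma exists_penrose {n : ℕ} (M : Matrix (Fin n) (Fin n) ℝ) (hM : Mᵀ = M) :
    ∃ X : Matrix (Fin n) (Fin n) ℝ,
      M * X * M = M ∧ X * M * X = X ∧ (M * X)ᵀ = M * X ∧ (X * M)ᵀ = X * M := by
  have hH : M.IsHermitian := by
    rw [Matrix.IsHermitian, Matrix.conjTranspose]
    ext i j; simpa using congrFun (congrFun hM i) j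
  set U : Matrix (Fin n) (Fin n) ℝ := (hH.eigenvectorUnitary : Matrix (Fin n) (Fin n) ℝ) with hU
  have hUU : U * star U = 1 := (Matrix.mem_unitaryGroup_iff).mp hH.eigenvectorUnitary.2
  have hUU' : star U * U = 1 := (Matrix.mem_unitaryGroup_iff').mp hH.eigenvectorUnitary.2
  set d : Fin n → ℝ := hH.eigenvalues with hd
  set e : Fin n → ℝ := fun i => if d i = 0 then 0 else (d i)⁻¹ with he
  have hded : (fun i => d i * e i * d i) = d := by
    funext i
    by_cases h : d i = 0
    · simp [he, h]
    · simp only [he, if_neg h]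
      field_simp
  have hede : (fun i => e i * d i * e i) = e := by
    funext i
    by_cases h : d i = 0
    · simp [he, h]
    · simp only [he, if_neg h]
      field_simp
  have hde_comm : (fun i => d i * e i) = (fun i => e i * d i) := by
    funext i; ring
  have hspec : M = U * diagonal d * star U := by
    simpa using hH.spectral_theorem
  have hsand : ∀ f g : Fin n → ℝ,
      (U * diagonal f * star U) * (U * diagonal g * star U) = U * diagonal (fun i => f i * g i) * star U := by
    intro f g
    calc (U * diagonal f * star U) * (U * diagonal g * star U)
        = U * (diagonal f * (star U * U) * diagonal g) * star U := by noncomm_ring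
      _ = U * (diagonal f * diagonal g) * star U := by rw [hUU']; noncomm_ring
      _ = U * diagonal (fun i => f i * g i) * star U := by rw [diagonal_mul_diagonal]
  have hsandT : ∀ f : Fin n → ℝ, (U * diagonal f * star U)ᵀ = U * diagonal f * star U := by
    intro f
    have hstarU : star U = Uᵀ := by
      rw [Matrix.star_eq_conjTranspose, Matrix.conjTranspose]
      ext i j
      simp [starRingEnd_apply]
    rw [hstarU]
    rw [Matrix.transpose_mul, Matrix.transpose_mul, Matrix.transpose_transpose, Matrix.diagonal_transpose]
    noncomm_ring
  refine ⟨U * diagonal e * star U, ?_, ?_, ?_, ?_⟩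
  · rw [hspec, hsand, hsand, hded]
  · rw [hspec, hsand, hsand, hede]
  · rw [hspec, hsand]; exact hsandT _
  · rw [hspec, hsand]; exact hsandT _

lemma dot_mulVec_transpose {m n : ℕ} (A : Matrix (Fin m) (Fin n) ℝ) (v : Fin m → ℝ)
    (w : Fin n → ℝ) : (Aᵀ *ᵥ v) ⬝ᵥ w = v ⬝ᵥ (A *ᵥ w) := by
  rw [dotProduct_comm, dotProduct_mulVec, vecMul_transpose, dotProduct_comm]

/-- Fredholm-type lemma: for a symmetric real matrix `B`, any vector whose dot product
vanishes on `ker B` lies in the range of `B`. -/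
lemma range_dot {n : ℕ} (B : Matrix (Fin n) (Fin n) ℝ) (hB : Bᵀ = B) (v : Fin n → ℝ)
    (hv : ∀ w, B *ᵥ w = 0 → v ⬝ᵥ w = 0) : ∃ p, B *ᵥ p = v := by
  classical
  set V := EuclideanSpace ℝ (Fin n)
  let f : V →ₗ[ℝ] V :=
    { toFun := fun z => (WithLp.equiv 2 (Fin n → ℝ)).symm (B *ᵥ (WithLp.equiv 2 (Fin n → ℝ) z))
      map_add' := by
        intro a b
        ext i
        show (B *ᵥ (a + b)) i = ((B *ᵥ a) + (B *ᵥ b) : Fin n → ℝ) i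
        rw [Matrix.mulVec_add]
      map_smul' := by
        intro c a
        ext i
        show (B *ᵥ (c • a)) i = (c • (B *ᵥ a) : Fin n → ℝ) i
        rw [Matrix.mulVec_smul] }
  set K : Submodule ℝ V := LinearMap.range f with hK
  have hinner : ∀ a b : V, (inner ℝ a b : ℝ) =
      (WithLp.equiv 2 (Fin n → ℝ) a) ⬝ᵥ (WithLp.equiv 2 (Fin n → ℝ) b) := by
    intro a b
    rw [PiLp.inner_apply]
    simp [dotProduct, mul_comm]
  obtain ⟨a, ha, w, hw, hdecomp⟩ :=
    K.exists_add_mem_mem_orthogonal ((WithLp.equiv 2 (Fin n → ℝ)).symm v)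
  set w' : Fin n → ℝ := WithLp.equiv 2 (Fin n → ℝ) w with hw'
  have h1 : ∀ z : Fin n → ℝ, (B *ᵥ z) ⬝ᵥ w' = 0 := by
    intro z
    have hz : f ((WithLp.equiv 2 (Fin n → ℝ)).symm z) ∈ K := ⟨_, rfl⟩
    have h := (Submodule.mem_orthogonal K w).mp hw _ hz
    rw [hinner] at h
    exact h
  -- B *ᵥ w' = 0 : test against z = B *ᵥ w' using symmetry
  have hBw : B *ᵥ w' = 0 := by
    have h2 : (B *ᵥ (B *ᵥ w')) ⬝ᵥ w' = 0 := h1 (B *ᵥ w')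
    have h3 := dot_mulVec_transpose B (B *ᵥ w') w'
    rw [hB, h2] at h3
    exact dotProduct_self_eq_zero.mp h3.symm
  -- v ⬝ᵥ w' = 0 by hypothesis, a ⬝ᵥ w' = 0, so w' ⬝ᵥ w' = 0 and w = 0
  have hvw : v ⬝ᵥ w' = 0 := hv w' hBw
  have haw : (WithLp.equiv 2 (Fin n → ℝ) a) ⬝ᵥ w' = 0 := by
    obtain ⟨z, hz⟩ := ha
    rw [← hz]
    exact h1 _
  have hww : w' ⬝ᵥ w' = 0 := by
    have : v = (WithLp.equiv 2 (Fin n → ℝ) a) + w' := by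
      have := congrArg (WithLp.equiv 2 (Fin n → ℝ)) hdecomp
      simp at this; exact this.trans rfl
    have h4 := congrArg (.  ⬝ᵥ w') this
    simp only [add_dotProduct] at h4
    rw [hvw, haw] at h4
    linarith
  have hwz : w' = 0 := dotProduct_self_eq_zero.mp hww
  obtain ⟨z, hz⟩ := ha
  refine ⟨WithLp.equiv 2 (Fin n → ℝ) z, ?_⟩
  have : v = (WithLp.equiv 2 (Fin n → ℝ) a) + w' := by
    have := congrArg (WithLp.equiv 2 (Fin n → ℝ)) hdecomp
    simp at this; exact this.trans rfl
  rw [this, hwz, add_zero, ← hz]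
  rfl

lemma dot_self_nonneg {k : ℕ} (v : Fin k → ℝ) : 0 ≤ v ⬝ᵥ v :=
  Finset.sum_nonneg fun i _ => mul_self_nonneg _

noncomputable def Bform {m n : ℕ} (A : Matrix (Fin m) (Fin n) ℝ)
    (R : Matrix (Fin n) (Fin n) ℝ) (α : ℝ)
    (p q : (Fin n → ℝ) × (Fin m → ℝ)) : ℝ :=
  (R *ᵥ p.1) ⬝ᵥ (R *ᵥ q.1)
    + α * ((A *ᵥ p.1 - α⁻¹ • p.2) ⬝ᵥ (A *ᵥ q.1 - α⁻¹ • q.2))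

noncomputable def Qform {m n : ℕ} (A : Matrix (Fin m) (Fin n) ℝ)
    (R : Matrix (Fin n) (Fin n) ℝ) (α : ℝ) (p : (Fin n → ℝ) × (Fin m → ℝ)) : ℝ :=
  Bform A R α p p

lemma Qform_nonneg {m n : ℕ} (A : Matrix (Fin m) (Fin n) ℝ)
    (R : Matrix (Fin n) (Fin n) ℝ) {α : ℝ} (hα : 0 < α) (p : (Fin n → ℝ) × (Fin m → ℝ)) :
    0 ≤ Qform A R α p := by
  have h1 := dot_self_nonneg (R *ᵥ p.1)
  have h2 := dot_self_nonneg (A *ᵥ p.1 - α⁻¹ • p.2)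
  have := mul_nonneg hα.le h2
  unfold Qform Bform
  linarith

lemma Qform_add {m n : ℕ} (A : Matrix (Fin m) (Fin n) ℝ)
    (R : Matrix (Fin n) (Fin n) ℝ) (α : ℝ) (p q : (Fin n → ℝ) × (Fin m → ℝ)) :
    Qform A R α (p + q) = Qform A R α p + Qform A R α q + 2 * Bform A R α p q := by
  unfold Qform Bform
  have h1 : (p + q).1 = p.1 + q.1 := rfl
  have h2 : (p + q).2 = p.2 + q.2 := rfl
  rw [h1, h2]
  have hτ : A *ᵥ (p.1 + q.1) - α⁻¹ • (p.2 + q.2)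
      = (A *ᵥ p.1 - α⁻¹ • p.2) + (A *ᵥ q.1 - α⁻¹ • q.2) := by
    rw [Matrix.mulVec_add, smul_add]
    abel
  rw [hτ, Matrix.mulVec_add]
  simp only [add_dotProduct, dotProduct_add]
  rw [dotProduct_comm (R *ᵥ q.1) (R *ᵥ p.1),
    dotProduct_comm (A *ᵥ q.1 - α⁻¹ • q.2) (A *ᵥ p.1 - α⁻¹ • p.2)]
  ring

lemma Bform_M {m n : ℕ} (A : Matrix (Fin m) (Fin n) ℝ) (M S R : Matrix (Fin n) (Fin n) ℝ)
    {α : ℝ} (hα : 0 < α) (hSdef : S = M - α • (Aᵀ * A)) (hRsym : Rᵀ = R) (hRR : R * R = S)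
    (p q : (Fin n → ℝ) × (Fin m → ℝ)) :
    Bform A R α p q = p.1 ⬝ᵥ (M *ᵥ q.1) - (A *ᵥ p.1) ⬝ᵥ q.2 - p.2 ⬝ᵥ (A *ᵥ q.1)
      + α⁻¹ * (p.2 ⬝ᵥ q.2) := by
  unfold Bform
  have hRterm : (R *ᵥ p.1) ⬝ᵥ (R *ᵥ q.1) = p.1 ⬝ᵥ (S *ᵥ q.1) := by
    have := dot_mulVec_transpose R p.1 (R *ᵥ q.1)
    rw [hRsym] at this
    rw [this, Matrix.mulVec_mulVec, hRR]
  rw [hRterm, hSdef]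
  rw [Matrix.sub_mulVec, Matrix.smul_mulVec, ← Matrix.mulVec_mulVec]
  have hAterm : p.1 ⬝ᵥ (Aᵀ *ᵥ (A *ᵥ q.1)) = (A *ᵥ p.1) ⬝ᵥ (A *ᵥ q.1) := by
    rw [dotProduct_comm, dot_mulVec_transpose, dotProduct_comm]
  simp only [dotProduct_sub, dotProduct_smul, sub_dotProduct, smul_dotProduct, smul_eq_mul]
  rw [hAterm]
  field_simp
  ring

lemma fejer_core {m n : ℕ} (A : Matrix (Fin m) (Fin n) ℝ) (b : Fin m → ℝ)
    (M S R : Matrix (Fin n) (Fin n) ℝ) {α : ℝ} (hα : 0 < α) (hMsymm : Mᵀ = M)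
    (hSdef : S = M - α • (Aᵀ * A)) (hRsym : Rᵀ = R) (hRR : R * R = S)
    (x0 x1 x0' x1' : Fin n → ℝ) (u0 u1 u0' u1' : Fin m → ℝ)
    (h1 : M *ᵥ (x0 - x1) = Aᵀ *ᵥ u0) (h1' : M *ᵥ (x0' - x1') = Aᵀ *ᵥ u0')
    (hmono : 0 ≤ (u1 - u1') ⬝ᵥ
      ((α⁻¹ • (u0 - u1) + (A *ᵥ ((2:ℝ) • x1 - x0) - b))
        - (α⁻¹ • (u0' - u1') + (A *ᵥ ((2:ℝ) • x1' - x0') - b)))) :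
    Qform A R α (x1 - x1', u1 - u1')
      + Qform A R α ((x0 - x1) - (x0' - x1'), (u0 - u1) - (u0' - u1'))
      ≤ Qform A R α (x0 - x0', u0 - u0') := by
  set ap : (Fin n → ℝ) × (Fin m → ℝ) := (x1 - x1', u1 - u1') with hap
  set e : (Fin n → ℝ) × (Fin m → ℝ) := ((x0 - x1) - (x0' - x1'), (u0 - u1) - (u0' - u1')) with he
  have hsum : (x0 - x0', u0 - u0') = ap + e := by
    apply Prod.ext
    · show x0 - x0' = (x1 - x1') + ((x0 - x1) - (x0' - x1'))
      abel
    · show u0 - u0' = (u1 - u1') + ((u0 - u1) - (u0' - u1'))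
      abel
  rw [hsum, Qform_add]
  -- remains: 0 ≤ 2 * Bform A R α ap e; show Bform ap e = the monotonicity pairing
  have hB : Bform A R α ap e = Bform A R α e ap := by
    unfold Bform
    rw [dotProduct_comm (R *ᵥ ap.1) (R *ᵥ e.1),
      dotProduct_comm (A *ᵥ ap.1 - α⁻¹ • ap.2) (A *ᵥ e.1 - α⁻¹ • e.2)]
  have hkey : Bform A R α e ap = (u1 - u1') ⬝ᵥ
      ((α⁻¹ • (u0 - u1) + (A *ᵥ ((2:ℝ) • x1 - x0) - b))
        - (α⁻¹ • (u0' - u1') + (A *ᵥ ((2:ℝ) • x1' - x0') - b))) := by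
    rw [Bform_M A M S R hα hSdef hRsym hRR]
    -- step 1: e.1 ⬝ᵥ (M *ᵥ ap.1) = (u0 - u0') ⬝ᵥ (A *ᵥ ap.1)
    have hMe : M *ᵥ e.1 = Aᵀ *ᵥ (u0 - u0') := by
      show M *ᵥ ((x0 - x1) - (x0' - x1')) = _
      rw [Matrix.mulVec_sub, h1, h1', ← Matrix.mulVec_sub]
    have step1 : e.1 ⬝ᵥ (M *ᵥ ap.1) = (u0 - u0') ⬝ᵥ (A *ᵥ ap.1) := by
      have ht := dot_mulVec_transpose M e.1 ap.1
      rw [hMsymm] at ht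
      rw [← ht, hMe, dot_mulVec_transpose]
    rw [step1]
    show (u0 - u0') ⬝ᵥ (A *ᵥ (x1 - x1'))
        - (A *ᵥ ((x0 - x1) - (x0' - x1'))) ⬝ᵥ (u1 - u1')
        - ((u0 - u1) - (u0' - u1')) ⬝ᵥ (A *ᵥ (x1 - x1'))
        + α⁻¹ * (((u0 - u1) - (u0' - u1')) ⬝ᵥ (u1 - u1')) = _
    simp only [Matrix.mulVec_sub, Matrix.mulVec_smul, sub_dotProduct, dotProduct_sub,
      dotProduct_add, add_dotProduct, dotProduct_smul, smul_dotProduct, smul_eq_mul,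
      smul_sub, smul_add, Pi.smul_apply]
    ring_nf
    rw [dotProduct_comm (A *ᵥ x0) u1, dotProduct_comm (A *ᵥ x0') u1,
      dotProduct_comm (A *ᵥ x1) u1, dotProduct_comm (A *ᵥ x1') u1,
      dotProduct_comm (A *ᵥ x0) u1', dotProduct_comm (A *ᵥ x0') u1',
      dotProduct_comm (A *ᵥ x1) u1', dotProduct_comm (A *ᵥ x1') u1',
      dotProduct_comm u0 u1, dotProduct_comm u0' u1, dotProduct_comm u0 u1',
      dotProduct_comm u0' u1']
    ring_nf
  have hQe := Qform_nonneg A R hα e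
  have hQap := Qform_nonneg A R hα ap
  have : 0 ≤ Bform A R α ap e := by rw [hB, hkey]; exact hmono
  linarith

lemma tendsto_pi_coord {k : ℕ} {v : ℕ → Fin k → ℝ} {vb : Fin k → ℝ}
    (h : Tendsto v atTop (𝓝 vb)) (i : Fin k) :
    Tendsto (fun j => v j i) atTop (𝓝 (vb i)) :=
  (tendsto_pi_nhds.mp h) i

lemma tendsto_dot {k : ℕ} {v w : ℕ → Fin k → ℝ} {vb wb : Fin k → ℝ}
    (hv : Tendsto v atTop (𝓝 vb)) (hw : Tendsto w atTop (𝓝 wb)) :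
    Tendsto (fun j => v j ⬝ᵥ w j) atTop (𝓝 (vb ⬝ᵥ wb)) := by
  have : ∀ j, v j ⬝ᵥ w j = ∑ i, v j i * w j i := fun j => rfl
  simp only [this]
  have : (vb ⬝ᵥ wb) = ∑ i, vb i * wb i := rfl
  rw [this]
  exact tendsto_finset_sum _ fun i _ => (tendsto_pi_coord hv i).mul (tendsto_pi_coord hw i)

lemma tendsto_mulVec {k l : ℕ} (B : Matrix (Fin l) (Fin k) ℝ) {v : ℕ → Fin k → ℝ}
    {vb : Fin k → ℝ} (h : Tendsto v atTop (𝓝 vb)) :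
    Tendsto (fun j => B *ᵥ v j) atTop (𝓝 (B *ᵥ vb)) := by
  rw [tendsto_pi_nhds]
  intro i
  have : ∀ j, (B *ᵥ v j) i = ∑ r, B i r * v j r := fun j => rfl
  simp only [this]
  have : (B *ᵥ vb) i = ∑ r, B i r * vb r := rfl
  rw [this]
  exact tendsto_finset_sum _ fun r _ => tendsto_const_nhds.mul (tendsto_pi_coord h r)

lemma tendsto_zero_of_dot_self {k : ℕ} {v : ℕ → Fin k → ℝ}
    (h : Tendsto (fun j => v j ⬝ᵥ v j) atTop (𝓝 0)) :
    Tendsto v atTop (𝓝 0) := by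
  rw [tendsto_pi_nhds]
  intro i
  have hsq : Tendsto (fun j => (v j i)^2) atTop (𝓝 0) := by
    apply squeeze_zero (fun j => sq_nonneg _) (fun j => ?_) h
    have : (v j i)^2 = v j i * v j i := sq (v j i) ▸ by ring
    rw [this]
    have : v j ⬝ᵥ v j = ∑ r, v j r * v j r := rfl
    rw [this]
    exact Finset.single_le_sum (f := fun r => v j r * v j r)
      (fun r _ => mul_self_nonneg _) (Finset.mem_univ i)
  have habs : Tendsto (fun j => |v j i|) atTop (𝓝 0) := by
    have h2 := (Real.continuous_sqrt.tendsto 0).comp hsq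
    have h3 : (fun x => Real.sqrt x) ∘ (fun j => (v j i)^2) = fun j => |v j i| :=
      funext fun j => Real.sqrt_sq_eq_abs _
    rw [h3] at h2
    simpa using h2
  simpa using tendsto_zero_iff_abs_tendsto_zero _ |>.mpr habs
lemma coord_le_sqrt_dot {k : ℕ} (v : Fin k → ℝ) (i : Fin k) : |v i| ≤ Real.sqrt (v ⬝ᵥ v) := by
  rw [← Real.sqrt_sq_eq_abs]
  apply Real.sqrt_le_sqrt
  have : v ⬝ᵥ v = ∑ r, v r * v r := rfl
  rw [this, sq]
  exact Finset.single_le_sum (f := fun r => v r * v r)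
    (fun r _ => mul_self_nonneg _) (Finset.mem_univ i)

lemma prox_subgrad {m : ℕ} {g : (Fin m → ℝ) → ℝ} (hg : ConvexOn ℝ Set.univ g) {α : ℝ}
    (hα : 0 < α) {z u' : Fin m → ℝ} (h : ProxRel g α z u') (y : Fin m → ℝ) :
    g (α⁻¹ • (z - u')) + u' ⬝ᵥ (y - α⁻¹ • (z - u')) ≤ g y := by
  set v : Fin m → ℝ := α⁻¹ • (z - u') with hv
  set d : Fin m → ℝ := y - v with hd
  set c : Fin m → ℝ := α⁻¹ • u' with hc
  have hvz : v - α⁻¹ • z = -c := by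
    rw [hv, hc, smul_sub]
    abel
  have hq : 0 ≤ d ⬝ᵥ d := by
    apply Finset.sum_nonneg
    intro i _
    exact mul_self_nonneg _
  have hdot : ∀ s : ℝ, (s • d - c) ⬝ᵥ (s • d - c)
      = s^2 * (d ⬝ᵥ d) - 2*s*(d ⬝ᵥ c) + c ⬝ᵥ c := by
    intro s
    simp only [sub_dotProduct, dotProduct_sub, smul_dotProduct, dotProduct_smul, smul_eq_mul]
    rw [dotProduct_comm c d]
    ring
  have key : ∀ t : ℝ, 0 < t → t ≤ 1 →
      α * (d ⬝ᵥ c) ≤ g y - g v + (α/2)*t*(d ⬝ᵥ d) := by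
    intro t ht ht1
    have hmin := (isMinOn_iff.mp h) (v + t • d) (Set.mem_univ _)
    have hpt : v + t • d = (1-t) • v + t • y := by
      rw [hd, smul_sub, sub_smul, one_smul]
      abel
    have hconv := hg.2 (Set.mem_univ v) (Set.mem_univ y)
      (by linarith : (0:ℝ) ≤ 1 - t) (le_of_lt ht) (by ring)
    rw [← hpt] at hconv
    simp only [smul_eq_mul] at hconv
    have harg : v + t • d - α⁻¹ • z = t • d - c := by
      rw [show v + t • d - α⁻¹ • z = (v - α⁻¹ • z) + t • d by abel, hvz]
      abel
    have harg0 : v - α⁻¹ • z = (0:ℝ) • d - c := by rw [hvz, zero_smul, zero_sub]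
    simp only [harg, ← hv, harg0] at hmin
    rw [hdot t, hdot 0] at hmin
    -- hmin : g v + (α/2)*(0 - 0 + c⬝c) ≤ g (v + t•d) + (α/2)*(...)
    have h2 : g v + (α/2)*(c ⬝ᵥ c) ≤ (1-t)*(g v) + t*(g y)
        + (α/2)*(t^2*(d ⬝ᵥ d) - 2*t*(d ⬝ᵥ c) + c ⬝ᵥ c) := by
      calc g v + (α/2)*(c ⬝ᵥ c) = g v + (α/2)*(0^2*(d ⬝ᵥ d) - 2*0*(d ⬝ᵥ c) + c ⬝ᵥ c) := by ring
        _ ≤ g (v + t • d) + (α/2)*(t^2*(d ⬝ᵥ d) - 2*t*(d ⬝ᵥ c) + c ⬝ᵥ c) := hmin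
        _ ≤ (1-t)*(g v) + t*(g y) + (α/2)*(t^2*(d ⬝ᵥ d) - 2*t*(d ⬝ᵥ c) + c ⬝ᵥ c) := by linarith
    have h3 : t * 0 ≤ t * ((g y - g v) + (α/2)*t*(d ⬝ᵥ d) - α*(d ⬝ᵥ c)) := by nlinarith
    have h4 := le_of_mul_le_mul_left h3 ht
    linarith
  have hda : α * (d ⬝ᵥ c) = u' ⬝ᵥ d := by
    rw [hc, dotProduct_smul, smul_eq_mul, ← mul_assoc, mul_inv_cancel₀ (ne_of_gt hα), one_mul,
      dotProduct_comm]
  have final : u' ⬝ᵥ d ≤ g y - g v := by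
    apply le_of_forall_pos_le_add
    intro ε hε
    set t : ℝ := min 1 (ε / ((α/2)*(d ⬝ᵥ d) + 1)) with htdef
    have hden : 0 < (α/2)*(d ⬝ᵥ d) + 1 := by nlinarith
    have ht : 0 < t := lt_min one_pos (div_pos hε hden)
    have ht1 : t ≤ 1 := min_le_left _ _
    have hkey := key t ht ht1
    rw [hda] at hkey
    have hbound : (α/2)*t*(d ⬝ᵥ d) ≤ ε := by
      have h5 : t ≤ ε / ((α/2)*(d ⬝ᵥ d) + 1) := min_le_right _ _
      have h6 : t * ((α/2)*(d ⬝ᵥ d) + 1) ≤ ε := by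
        rw [← le_div_iff₀ hden] at *
        exact h5
      nlinarith
    linarith
  linarith


lemma split_sum_zero {α : ℝ} (hα : 0 < α) {f h : ℕ → ℝ} (hf : ∀ k, 0 ≤ f k)
    (hh : ∀ k, 0 ≤ h k) (hsum : Tendsto (fun k => f k + α * h k) atTop (𝓝 0)) :
    Tendsto f atTop (𝓝 0) ∧ Tendsto h atTop (𝓝 0) := by
  constructor
  · apply squeeze_zero hf (fun k => ?_) hsum
    nlinarith [hh k, hα]
  · have h2 : Tendsto (fun k => (f k + α * h k) / α) atTop (𝓝 0) := by
      have := hsum.div_const α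
      simpa using this
    apply squeeze_zero hh (fun k => ?_) h2
    rw [le_div_iff₀ hα]
    nlinarith [hf k, hh k]

section
open scoped MatrixOrder
lemma exists_sqrt_psd {n : ℕ} (S : Matrix (Fin n) (Fin n) ℝ) (hS : S.PosSemidef) :
    ∃ R : Matrix (Fin n) (Fin n) ℝ, Rᵀ = R ∧ R * R = S := by
  refine ⟨CFC.sqrt S, ?_, CFC.sqrt_mul_sqrt_self S hS.nonneg⟩
  have h := (CFC.sqrt_nonneg S).posSemidef.1
  rw [← Matrix.conjTranspose_eq_transpose_of_trivial]
  exact h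
end

theorem ncs_convergence
    {m n : ℕ}
    (A : Matrix (Fin m) (Fin n) ℝ) (b : Fin m → ℝ)
    (α : ℝ) (hα : 0 < α)
    (g : (Fin m → ℝ) → ℝ) (hg : ConvexOn ℝ Set.univ g)
    (M : Matrix (Fin n) (Fin n) ℝ) (hMsymm : Mᵀ = M)
    (hMpsd : (M - α • (Aᵀ * A)).PosSemidef)
    -- NCS iterates from an arbitrary initialization (x 0, u 0):
    (x : ℕ → Fin n → ℝ) (u : ℕ → Fin m → ℝ)
    (hx : ∀ k, x (k + 1) = x k - mpInv M *ᵥ (Aᵀ *ᵥ u k))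
    (hu : ∀ k, ProxRel g α
      (u k + α • (A *ᵥ ((2 : ℝ) • x (k + 1) - x k) - b)) (u (k + 1)))
    -- a primal solution x⋆ together with a dual certificate u⋆ exists:
    (xs : Fin n → ℝ) (us : Fin m → ℝ)
    (hxs : ∀ y, g (A *ᵥ xs - b) ≤ g (A *ᵥ y - b))
    (hus : Aᵀ *ᵥ us = 0)
    (hsub : ∀ y, g (A *ᵥ xs - b) + us ⬝ᵥ (y - (A *ᵥ xs - b)) ≤ g y) :
    -- the iterates converge to a primal solution and a dual certificate for it:
    ∃ (xb : Fin n → ℝ) (ub : Fin m → ℝ),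
      (∀ y, g (A *ᵥ xb - b) ≤ g (A *ᵥ y - b)) ∧
      Aᵀ *ᵥ ub = 0 ∧
      (∀ y, g (A *ᵥ xb - b) + ub ⬝ᵥ (y - (A *ᵥ xb - b)) ≤ g y) ∧
      Tendsto x atTop (𝓝 xb) ∧ Tendsto u atTop (𝓝 ub) := by
  classical
  set S : Matrix (Fin n) (Fin n) ℝ := M - α • (Aᵀ * A) with hSdef
  have hS : S.PosSemidef := hMpsd
  obtain ⟨R, hRsym, hRR⟩ := exists_sqrt_psd S hS
  -- Moore-Penrose pseudoinverse facts
  have hmp : ∃ X : Matrix (Fin n) (Fin n) ℝ,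
      M * X * M = M ∧ X * M * X = X ∧ (M * X)ᵀ = M * X ∧ (X * M)ᵀ = X * M :=
    exists_penrose M hMsymm
  have hXspec : M * mpInv M * M = M ∧ mpInv M * M * mpInv M = mpInv M ∧
      (M * mpInv M)ᵀ = M * mpInv M ∧ (mpInv M * M)ᵀ = mpInv M * M := by
    rw [mpInv, dif_pos hmp]
    exact hmp.choose_spec
  set X : Matrix (Fin n) (Fin n) ℝ := mpInv M with hXdef
  obtain ⟨hP1, hP2, hP3, hP4⟩ := hXspec
  -- kernel of M is inside kernel of A
  have hker : ∀ w, M *ᵥ w = 0 → A *ᵥ w = 0 := by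
    intro w hw
    have hpsd := hS.dotProduct_mulVec_nonneg w
    have h1 : star w = w := rfl
    rw [h1] at hpsd
    have h2 : S *ᵥ w = M *ᵥ w - α • (Aᵀ *ᵥ (A *ᵥ w)) := by
      rw [hSdef, Matrix.sub_mulVec, Matrix.smul_mulVec, Matrix.mulVec_mulVec]
    rw [h2, hw] at hpsd
    have h3 : w ⬝ᵥ (0 - α • (Aᵀ *ᵥ (A *ᵥ w))) = -(α * ((A *ᵥ w) ⬝ᵥ (A *ᵥ w))) := by
      rw [zero_sub, dotProduct_neg, dotProduct_smul, smul_eq_mul]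
      congr 2
      rw [dotProduct_comm, dot_mulVec_transpose]
    rw [h3] at hpsd
    have h4 : (A *ᵥ w) ⬝ᵥ (A *ᵥ w) ≤ 0 := by nlinarith [dot_self_nonneg (A *ᵥ w)]
    have h5 : (A *ᵥ w) ⬝ᵥ (A *ᵥ w) = 0 := le_antisymm h4 (dot_self_nonneg _)
    exact dotProduct_self_eq_zero.mp h5
  -- range of Aᵀ is inside range of M
  have hrange : ∀ y : Fin m → ℝ, ∃ p, M *ᵥ p = Aᵀ *ᵥ y := by
    intro y
    apply range_dot M hMsymm
    intro w hw
    rw [dot_mulVec_transpose, hker w hw, dotProduct_zero]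
  have hMXA : ∀ y : Fin m → ℝ, M *ᵥ (X *ᵥ (Aᵀ *ᵥ y)) = Aᵀ *ᵥ y := by
    intro y
    obtain ⟨p, hp⟩ := hrange y
    rw [← hp]
    calc M *ᵥ (X *ᵥ (M *ᵥ p)) = (M * X * M) *ᵥ p := by
          rw [← Matrix.mulVec_mulVec, ← Matrix.mulVec_mulVec]
      _ = M *ᵥ p := by rw [hP1]
  have hxdiff : ∀ k, x k - x (k+1) = X *ᵥ (Aᵀ *ᵥ u k) := by
    intro k
    rw [hx k]
    abel
  have hMe : ∀ k, M *ᵥ (x k - x (k+1)) = Aᵀ *ᵥ u k := by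
    intro k
    rw [hxdiff k]
    exact hMXA _
  -- subgradient property of the iterates
  set v : ℕ → Fin m → ℝ :=
    fun k => α⁻¹ • (u k - u (k+1)) + (A *ᵥ ((2:ℝ) • x (k+1) - x k) - b) with hvdef
  have hsubg : ∀ k y, g (v k) + u (k+1) ⬝ᵥ (y - v k) ≤ g y := by
    intro k y
    have h := prox_subgrad hg hα (hu k) y
    have hz : α⁻¹ • ((u k + α • (A *ᵥ ((2:ℝ) • x (k + 1) - x k) - b)) - u (k+1)) = v k := by
      have h1 : (u k + α • (A *ᵥ ((2:ℝ) • x (k + 1) - x k) - b)) - u (k+1)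
          = (u k - u (k+1)) + α • (A *ᵥ ((2:ℝ) • x (k + 1) - x k) - b) := by abel
      rw [h1, smul_add, smul_smul, inv_mul_cancel₀ (ne_of_gt hα), one_smul]
    rw [hz] at h
    exact h
  -- monotonicity of subdifferential along the iterates
  have hmono2 : ∀ k j, 0 ≤ (u (k+1) - u (j+1)) ⬝ᵥ (v k - v j) := by
    intro k j
    have h1 := hsubg k (v j)
    have h2 := hsubg j (v k)
    have e1 : v j - v k = -(v k - v j) := by abel
    rw [e1, dotProduct_neg] at h1
    rw [sub_dotProduct]
    linarith
  have hmonos : ∀ k, 0 ≤ (u (k+1) - us) ⬝ᵥ (v k - (A *ᵥ xs - b)) := by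
    intro k
    have h1 := hsubg k (A *ᵥ xs - b)
    have h2 := hsub (v k)
    have e1 : A *ᵥ xs - b - v k = -(v k - (A *ᵥ xs - b)) := by abel
    rw [e1, dotProduct_neg] at h1
    rw [sub_dotProduct]
    linarith
  -- Fejér inequality with respect to the given saddle point
  have hMes : M *ᵥ (xs - xs) = Aᵀ *ᵥ us := by rw [sub_self, Matrix.mulVec_zero, hus]
  have fejer_star : ∀ k,
      Qform A R α (x (k+1) - xs, u (k+1) - us)
        + Qform A R α (x k - x (k+1), u k - u (k+1))
        ≤ Qform A R α (x k - xs, u k - us) := by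
    intro k
    have hm : 0 ≤ (u (k+1) - us) ⬝ᵥ
        ((α⁻¹ • (u k - u (k+1)) + (A *ᵥ ((2:ℝ) • x (k+1) - x k) - b))
          - (α⁻¹ • (us - us) + (A *ᵥ ((2:ℝ) • xs - xs) - b))) := by
      have harg : (α⁻¹ • (u k - u (k+1)) + (A *ᵥ ((2:ℝ) • x (k+1) - x k) - b))
          - (α⁻¹ • (us - us) + (A *ᵥ ((2:ℝ) • xs - xs) - b)) = v k - (A *ᵥ xs - b) := by
        have h2 : (2:ℝ) • xs - xs = xs := by
          rw [two_smul]; abel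
        rw [h2, sub_self, smul_zero, zero_add, hvdef]
      rw [harg]
      exact hmonos k
    have hcore := fejer_core A b M S R hα hMsymm hSdef hRsym hRR
      (x k) (x (k+1)) xs xs (u k) (u (k+1)) us us (hMe k) hMes hm
    have e1 : x k - x (k+1) - (xs - xs) = x k - x (k+1) := by abel
    have e2 : u k - u (k+1) - (us - us) = u k - u (k+1) := by abel
    rw [e1, e2] at hcore
    exact hcore
  -- Fejér inequality between shifted copies of the iterates
  have fejer_pair : ∀ k j,
      Qform A R α (x (k+1) - x (j+1), u (k+1) - u (j+1))
        ≤ Qform A R α (x k - x j, u k - u j) := by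
    intro k j
    have hm : 0 ≤ (u (k+1) - u (j+1)) ⬝ᵥ
        ((α⁻¹ • (u k - u (k+1)) + (A *ᵥ ((2:ℝ) • x (k+1) - x k) - b))
          - (α⁻¹ • (u j - u (j+1)) + (A *ᵥ ((2:ℝ) • x (j+1) - x j) - b))) := hmono2 k j
    have hcore := fejer_core A b M S R hα hMsymm hSdef hRsym hRR
      (x k) (x (k+1)) (x j) (x (j+1)) (u k) (u (k+1)) (u j) (u (j+1)) (hMe k) (hMe j) hm
    have hQ := Qform_nonneg A R hα
      (x k - x (k+1) - (x j - x (j+1)), u k - u (k+1) - (u j - u (j+1)))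
    linarith
  -- the "visible" coordinates of the iterates
  set z1 : ℕ → Fin n → ℝ := fun k => R *ᵥ x k with hz1def
  set z2 : ℕ → Fin m → ℝ := fun k => A *ᵥ x k - α⁻¹ • u k with hz2def
  set z1s : Fin n → ℝ := R *ᵥ xs with hz1sdef
  set z2s : Fin m → ℝ := A *ᵥ xs - α⁻¹ • us with hz2sdef
  have hQdiff : ∀ (p p' : Fin n → ℝ) (w w' : Fin m → ℝ),
      Qform A R α (p - p', w - w')
        = (R *ᵥ p - R *ᵥ p') ⬝ᵥ (R *ᵥ p - R *ᵥ p')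
          + α * (((A *ᵥ p - α⁻¹ • w) - (A *ᵥ p' - α⁻¹ • w')) ⬝ᵥ
              ((A *ᵥ p - α⁻¹ • w) - (A *ᵥ p' - α⁻¹ • w'))) := by
    intro p p' w w'
    unfold Qform Bform
    show (R *ᵥ (p - p')) ⬝ᵥ (R *ᵥ (p - p'))
        + α * ((A *ᵥ (p - p') - α⁻¹ • (w - w')) ⬝ᵥ (A *ᵥ (p - p') - α⁻¹ • (w - w'))) = _
    have e1 : A *ᵥ (p - p') - α⁻¹ • (w - w')
        = (A *ᵥ p - α⁻¹ • w) - (A *ᵥ p' - α⁻¹ • w') := by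
      rw [Matrix.mulVec_sub, smul_sub]
      abel
    rw [Matrix.mulVec_sub, e1]
  have hQz : ∀ k j, Qform A R α (x k - x j, u k - u j)
      = (z1 k - z1 j) ⬝ᵥ (z1 k - z1 j) + α * ((z2 k - z2 j) ⬝ᵥ (z2 k - z2 j)) :=
    fun k j => hQdiff (x k) (x j) (u k) (u j)
  have hQzs : ∀ k, Qform A R α (x k - xs, u k - us)
      = (z1 k - z1s) ⬝ᵥ (z1 k - z1s) + α * ((z2 k - z2s) ⬝ᵥ (z2 k - z2s)) :=
    fun k => hQdiff (x k) xs (u k) us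
  -- the distance to the saddle point is antitone
  have hD_succ : ∀ k, Qform A R α (x (k+1) - xs, u (k+1) - us)
      ≤ Qform A R α (x k - xs, u k - us) := by
    intro k
    have h1 := fejer_star k
    have h2 := Qform_nonneg A R hα (x k - x (k+1), u k - u (k+1))
    linarith
  have hD_anti : Antitone (fun k => Qform A R α (x k - xs, u k - us)) :=
    antitone_nat_of_succ_le hD_succ
  have hD_nonneg : ∀ k, 0 ≤ Qform A R α (x k - xs, u k - us) :=
    fun k => Qform_nonneg A R hα _
  have hD_bdd : BddBelow (Set.range fun k => Qform A R α (x k - xs, u k - us)) := by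
    refine ⟨0, ?_⟩
    rintro y ⟨k, rfl⟩
    exact hD_nonneg k
  have hDlim := tendsto_atTop_ciInf hD_anti hD_bdd
  have hDlim1 : Tendsto (fun k => Qform A R α (x (k+1) - xs, u (k+1) - us)) atTop
      (𝓝 (⨅ k, Qform A R α (x k - xs, u k - us))) := by
    exact (tendsto_add_atTop_iff_nat 1).mpr hDlim
  have hNe0 : Tendsto (fun k => Qform A R α (x k - x (k+1), u k - u (k+1))) atTop (𝓝 0) := by
    have hup : Tendsto (fun k => Qform A R α (x k - xs, u k - us)
        - Qform A R α (x (k+1) - xs, u (k+1) - us)) atTop (𝓝 0) := by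
      have := hDlim.sub hDlim1
      simpa using this
    apply squeeze_zero (fun k => Qform_nonneg A R hα _) (fun k => ?_) hup
    have := fejer_star k
    linarith
  -- boundedness of the visible coordinates
  have hz1bound : ∀ k, z1 k ∈ Metric.closedBall z1s (Real.sqrt (Qform A R α (x 0 - xs, u 0 - us))) := by
    intro k
    rw [Metric.mem_closedBall, dist_eq_norm]
    rw [pi_norm_le_iff_of_nonneg (Real.sqrt_nonneg _)]
    intro i
    rw [Real.norm_eq_abs]
    have h1 : |(z1 k - z1s) i| ≤ Real.sqrt ((z1 k - z1s) ⬝ᵥ (z1 k - z1s)) :=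
      coord_le_sqrt_dot _ i
    have h2 : (z1 k - z1s) ⬝ᵥ (z1 k - z1s) ≤ Qform A R α (x 0 - xs, u 0 - us) := by
      have h3 : Qform A R α (x k - xs, u k - us) ≤ Qform A R α (x 0 - xs, u 0 - us) :=
        hD_anti (Nat.zero_le k)
      rw [hQzs k] at h3
      have h4 := dot_self_nonneg (z2 k - z2s)
      nlinarith
    calc |(z1 k) i - z1s i| = |(z1 k - z1s) i| := by rw [Pi.sub_apply]
      _ ≤ _ := h1
      _ ≤ _ := Real.sqrt_le_sqrt h2
  have hz2bound : ∀ k, z2 k ∈ Metric.closedBall z2s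
      (Real.sqrt (Qform A R α (x 0 - xs, u 0 - us) / α)) := by
    intro k
    rw [Metric.mem_closedBall, dist_eq_norm]
    rw [pi_norm_le_iff_of_nonneg (Real.sqrt_nonneg _)]
    intro i
    rw [Real.norm_eq_abs]
    have h1 : |(z2 k - z2s) i| ≤ Real.sqrt ((z2 k - z2s) ⬝ᵥ (z2 k - z2s)) :=
      coord_le_sqrt_dot _ i
    have h2 : (z2 k - z2s) ⬝ᵥ (z2 k - z2s) ≤ Qform A R α (x 0 - xs, u 0 - us) / α := by
      have h3 : Qform A R α (x k - xs, u k - us) ≤ Qform A R α (x 0 - xs, u 0 - us) :=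
        hD_anti (Nat.zero_le k)
      rw [hQzs k] at h3
      have h4 := dot_self_nonneg (z1 k - z1s)
      rw [le_div_iff₀ hα]
      nlinarith
    calc |(z2 k) i - z2s i| = |(z2 k - z2s) i| := by rw [Pi.sub_apply]
      _ ≤ _ := h1
      _ ≤ _ := Real.sqrt_le_sqrt h2
  -- extract a convergent subsequence of the visible coordinates
  obtain ⟨a1, -, φ, hφmono, hφconv⟩ :=
    tendsto_subseq_of_bounded Metric.isBounded_closedBall hz1bound
  obtain ⟨a2, -, ψ, hψmono, hψconv⟩ :=
    tendsto_subseq_of_bounded Metric.isBounded_closedBall (fun j => hz2bound (φ j))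
  set θ : ℕ → ℕ := φ ∘ ψ with hθdef
  have hθmono : StrictMono θ := hφmono.comp hψmono
  have hz1θ : Tendsto (fun j => z1 (θ j)) atTop (𝓝 a1) := hφconv.comp hψmono.tendsto_atTop
  have hz2θ : Tendsto (fun j => z2 (θ j)) atTop (𝓝 a2) := hψconv
  -- steps tend to zero, coordinatewise
  have hNe_split := split_sum_zero hα
    (fun k => dot_self_nonneg (z1 k - z1 (k+1))) (fun k => dot_self_nonneg (z2 k - z2 (k+1)))
    (by
      have he : (fun k => (z1 k - z1 (k+1)) ⬝ᵥ (z1 k - z1 (k+1))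
          + α * ((z2 k - z2 (k+1)) ⬝ᵥ (z2 k - z2 (k+1))))
          = fun k => Qform A R α (x k - x (k+1), u k - u (k+1)) := by
        funext k
        rw [hQz k (k+1)]
      rw [he]
      exact hNe0)
  have hd1 : Tendsto (fun k => z1 k - z1 (k+1)) atTop (𝓝 0) :=
    tendsto_zero_of_dot_self hNe_split.1
  have hd2 : Tendsto (fun k => z2 k - z2 (k+1)) atTop (𝓝 0) :=
    tendsto_zero_of_dot_self hNe_split.2
  have hz1θ1 : Tendsto (fun j => z1 (θ j + 1)) atTop (𝓝 a1) := by
    have h := hz1θ.sub (hd1.comp hθmono.tendsto_atTop)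
    simp only [Function.comp] at h
    have he : (fun j => z1 (θ j) - (z1 (θ j) - z1 (θ j + 1))) = fun j => z1 (θ j + 1) := by
      funext j
      abel
    rw [he] at h
    simpa using h
  have hz2θ1 : Tendsto (fun j => z2 (θ j + 1)) atTop (𝓝 a2) := by
    have h := hz2θ.sub (hd2.comp hθmono.tendsto_atTop)
    simp only [Function.comp] at h
    have he : (fun j => z2 (θ j) - (z2 (θ j) - z2 (θ j + 1))) = fun j => z2 (θ j + 1) := by
      funext j
      abel
    rw [he] at h
    simpa using h
  -- the distance to the cluster point, in visible coordinates
  have hL_nonneg : ∀ k, 0 ≤ (z1 k - a1) ⬝ᵥ (z1 k - a1) + α * ((z2 k - a2) ⬝ᵥ (z2 k - a2)) := by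
    intro k
    have h1 := dot_self_nonneg (z1 k - a1)
    have h2 := dot_self_nonneg (z2 k - a2)
    nlinarith
  have hLθ : Tendsto (fun j => (z1 (θ j) - a1) ⬝ᵥ (z1 (θ j) - a1)
      + α * ((z2 (θ j) - a2) ⬝ᵥ (z2 (θ j) - a2))) atTop (𝓝 0) := by
    have h1 : Tendsto (fun j => z1 (θ j) - a1) atTop (𝓝 (a1 - a1)) :=
      hz1θ.sub tendsto_const_nhds
    rw [sub_self] at h1
    have h2 : Tendsto (fun j => z2 (θ j) - a2) atTop (𝓝 (a2 - a2)) :=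
      hz2θ.sub tendsto_const_nhds
    rw [sub_self] at h2
    have h3 := (tendsto_dot h1 h1).add ((tendsto_dot h2 h2).const_mul α)
    simpa [mul_comm] using h3
  have hLanti : ∀ k, (z1 (k+1) - a1) ⬝ᵥ (z1 (k+1) - a1) + α * ((z2 (k+1) - a2) ⬝ᵥ (z2 (k+1) - a2))
      ≤ (z1 k - a1) ⬝ᵥ (z1 k - a1) + α * ((z2 k - a2) ⬝ᵥ (z2 k - a2)) := by
    intro k
    have hineq : ∀ j : ℕ,
        (z1 (k+1) - z1 (θ j + 1)) ⬝ᵥ (z1 (k+1) - z1 (θ j + 1))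
          + α * ((z2 (k+1) - z2 (θ j + 1)) ⬝ᵥ (z2 (k+1) - z2 (θ j + 1)))
        ≤ (z1 k - z1 (θ j)) ⬝ᵥ (z1 k - z1 (θ j))
          + α * ((z2 k - z2 (θ j)) ⬝ᵥ (z2 k - z2 (θ j))) := by
      intro j
      have h := fejer_pair k (θ j)
      rw [hQz k (θ j), hQz (k+1) (θ j + 1)] at h
      exact h
    have hLHS : Tendsto (fun j => (z1 (k+1) - z1 (θ j + 1)) ⬝ᵥ (z1 (k+1) - z1 (θ j + 1))
        + α * ((z2 (k+1) - z2 (θ j + 1)) ⬝ᵥ (z2 (k+1) - z2 (θ j + 1)))) atTop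
        (𝓝 ((z1 (k+1) - a1) ⬝ᵥ (z1 (k+1) - a1) + α * ((z2 (k+1) - a2) ⬝ᵥ (z2 (k+1) - a2)))) := by
      have h1 : Tendsto (fun j => z1 (k+1) - z1 (θ j + 1)) atTop (𝓝 (z1 (k+1) - a1)) :=
        tendsto_const_nhds.sub hz1θ1
      have h2 : Tendsto (fun j => z2 (k+1) - z2 (θ j + 1)) atTop (𝓝 (z2 (k+1) - a2)) :=
        tendsto_const_nhds.sub hz2θ1
      exact (tendsto_dot h1 h1).add ((tendsto_dot h2 h2).const_mul α)
    have hRHS : Tendsto (fun j => (z1 k - z1 (θ j)) ⬝ᵥ (z1 k - z1 (θ j))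
        + α * ((z2 k - z2 (θ j)) ⬝ᵥ (z2 k - z2 (θ j)))) atTop
        (𝓝 ((z1 k - a1) ⬝ᵥ (z1 k - a1) + α * ((z2 k - a2) ⬝ᵥ (z2 k - a2)))) := by
      have h1 : Tendsto (fun j => z1 k - z1 (θ j)) atTop (𝓝 (z1 k - a1)) :=
        tendsto_const_nhds.sub hz1θ
      have h2 : Tendsto (fun j => z2 k - z2 (θ j)) atTop (𝓝 (z2 k - a2)) :=
        tendsto_const_nhds.sub hz2θ
      exact (tendsto_dot h1 h1).add ((tendsto_dot h2 h2).const_mul α)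
    exact le_of_tendsto_of_tendsto' hLHS hRHS hineq
  -- the distance to the cluster point tends to zero
  have hL0 : Tendsto (fun k => (z1 k - a1) ⬝ᵥ (z1 k - a1)
      + α * ((z2 k - a2) ⬝ᵥ (z2 k - a2))) atTop (𝓝 0) := by
    have hanti : Antitone (fun k => (z1 k - a1) ⬝ᵥ (z1 k - a1)
        + α * ((z2 k - a2) ⬝ᵥ (z2 k - a2))) := antitone_nat_of_succ_le hLanti
    have hbdd : BddBelow (Set.range (fun k => (z1 k - a1) ⬝ᵥ (z1 k - a1)
        + α * ((z2 k - a2) ⬝ᵥ (z2 k - a2)))) := by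
      refine ⟨0, ?_⟩
      rintro y ⟨k, rfl⟩
      exact hL_nonneg k
    have hlim := tendsto_atTop_ciInf hanti hbdd
    have hsub2 := hlim.comp hθmono.tendsto_atTop
    have := tendsto_nhds_unique hsub2 hLθ
    rwa [this] at hlim
  have hLsplit := split_sum_zero hα (fun k => dot_self_nonneg (z1 k - a1))
    (fun k => dot_self_nonneg (z2 k - a2)) hL0
  have hz1conv : Tendsto z1 atTop (𝓝 a1) := by
    have h := tendsto_zero_of_dot_self hLsplit.1
    have h2 := h.add (tendsto_const_nhds (x := a1))
    simpa using h2
  have hz2conv : Tendsto z2 atTop (𝓝 a2) := by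
    have h := tendsto_zero_of_dot_self hLsplit.2
    have h2 := h.add (tendsto_const_nhds (x := a2))
    simpa using h2
  -- recover convergence of the iterates themselves
  have hu_eq : ∀ k, u k = α • (A *ᵥ x k) - α • z2 k := by
    intro k
    simp only [hz2def]
    rw [smul_sub, smul_smul, mul_inv_cancel₀ (ne_of_gt hα), one_smul]
    abel
  have hAu : ∀ k, Aᵀ *ᵥ u k = M *ᵥ x k - R *ᵥ z1 k - α • (Aᵀ *ᵥ z2 k) := by
    intro k
    have h1 : α • (Aᵀ *ᵥ (A *ᵥ x k)) = M *ᵥ x k - S *ᵥ x k := by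
      rw [hSdef, Matrix.sub_mulVec, Matrix.smul_mulVec, Matrix.mulVec_mulVec]
      abel
    have h2 : S *ᵥ x k = R *ᵥ z1 k := by
      simp only [hz1def]
      rw [Matrix.mulVec_mulVec, hRR]
    conv_lhs => rw [hu_eq k]
    rw [Matrix.mulVec_sub, Matrix.mulVec_smul, Matrix.mulVec_smul, h1, h2]
  have hπ : ∀ k, x k - X *ᵥ (M *ᵥ x k) = x 0 - X *ᵥ (M *ᵥ x 0) := by
    intro k
    induction k with
    | zero => rfl
    | succ k ih =>
      rw [hx k]
      have h1 : X *ᵥ (M *ᵥ (x k - X *ᵥ (Aᵀ *ᵥ u k)))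
          = X *ᵥ (M *ᵥ x k) - X *ᵥ (Aᵀ *ᵥ u k) := by
        rw [Matrix.mulVec_sub M, Matrix.mulVec_sub X]
        congr 1
        calc X *ᵥ (M *ᵥ (X *ᵥ (Aᵀ *ᵥ u k))) = (X * M * X) *ᵥ (Aᵀ *ᵥ u k) := by
              rw [← Matrix.mulVec_mulVec, ← Matrix.mulVec_mulVec]
          _ = X *ᵥ (Aᵀ *ᵥ u k) := by rw [hP2]
      rw [h1]
      have h2 : x k - X *ᵥ (Aᵀ *ᵥ u k) - (X *ᵥ (M *ᵥ x k) - X *ᵥ (Aᵀ *ᵥ u k))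
          = x k - X *ᵥ (M *ᵥ x k) := by abel
      rw [h2, ih]
  have hxrec : ∀ k, x (k+1) = (x 0 - X *ᵥ (M *ᵥ x 0))
      + X *ᵥ (R *ᵥ z1 k + α • (Aᵀ *ᵥ z2 k)) := by
    intro k
    rw [hx k, ← hπ k, hAu k]
    rw [Matrix.mulVec_sub X, Matrix.mulVec_sub X, Matrix.mulVec_add X, Matrix.mulVec_smul]
    abel
  set xb : Fin n → ℝ := (x 0 - X *ᵥ (M *ᵥ x 0)) + X *ᵥ (R *ᵥ a1 + α • (Aᵀ *ᵥ a2)) with hxbdef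
  have hxconv1 : Tendsto (fun k => x (k+1)) atTop (𝓝 xb) := by
    have h1 : Tendsto (fun k => R *ᵥ z1 k + α • (Aᵀ *ᵥ z2 k)) atTop
        (𝓝 (R *ᵥ a1 + α • (Aᵀ *ᵥ a2))) :=
      (tendsto_mulVec R hz1conv).add ((tendsto_mulVec Aᵀ hz2conv).const_smul α)
    have h2 := (tendsto_mulVec X h1).const_add (x 0 - X *ᵥ (M *ᵥ x 0))
    have he : (fun k => x (k+1))
        = fun k => (x 0 - X *ᵥ (M *ᵥ x 0)) + X *ᵥ (R *ᵥ z1 k + α • (Aᵀ *ᵥ z2 k)) :=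
      funext hxrec
    rw [he]
    exact h2
  have hxconv : Tendsto x atTop (𝓝 xb) := (tendsto_add_atTop_iff_nat 1).mp hxconv1
  set ub : Fin m → ℝ := α • (A *ᵥ xb) - α • a2 with hubdef
  have huconv : Tendsto u atTop (𝓝 ub) := by
    have h1 : Tendsto (fun k => α • (A *ᵥ x k) - α • z2 k) atTop
        (𝓝 (α • (A *ᵥ xb) - α • a2)) :=
      ((tendsto_mulVec A hxconv).const_smul α).sub (hz2conv.const_smul α)
    have he : u = fun k => α • (A *ᵥ x k) - α • z2 k := funext hu_eq
    rw [he]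
    exact h1
  have huconv1 : Tendsto (fun k => u (k+1)) atTop (𝓝 ub) :=
    (tendsto_add_atTop_iff_nat 1).mpr huconv
  -- the limit is a saddle point
  have hAtub : Aᵀ *ᵥ ub = 0 := by
    have h1 : Tendsto (fun k => Aᵀ *ᵥ u k) atTop (𝓝 (Aᵀ *ᵥ ub)) := tendsto_mulVec Aᵀ huconv
    have h2 : Tendsto (fun k => M *ᵥ (x k - x (k+1))) atTop (𝓝 (M *ᵥ (xb - xb))) :=
      tendsto_mulVec M (hxconv.sub hxconv1)
    rw [sub_self, Matrix.mulVec_zero] at h2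
    have he : (fun k => M *ᵥ (x k - x (k+1))) = fun k => Aᵀ *ᵥ u k := funext hMe
    rw [he] at h2
    exact tendsto_nhds_unique h1 h2
  have hvlim : Tendsto v atTop (𝓝 (A *ᵥ xb - b)) := by
    have h1 : Tendsto (fun k => α⁻¹ • (u k - u (k+1))) atTop (𝓝 (α⁻¹ • (ub - ub))) :=
      (huconv.sub huconv1).const_smul α⁻¹
    rw [sub_self, smul_zero] at h1
    have h2 : Tendsto (fun k => (2:ℝ) • x (k+1) - x k) atTop (𝓝 ((2:ℝ) • xb - xb)) :=
      (hxconv1.const_smul (2:ℝ)).sub hxconv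
    have h3 := (tendsto_mulVec A h2).sub (tendsto_const_nhds (x := b))
    have h4 := h1.add h3
    rw [zero_add] at h4
    have he2 : A *ᵥ ((2:ℝ) • xb - xb) - b = A *ᵥ xb - b := by
      have h5 : (2:ℝ) • xb - xb = xb := by
        rw [two_smul]; abel
      rw [h5]
    rw [he2] at h4
    rw [hvdef]
    exact h4
  have hgc : Continuous g := by
    have h := ConvexOn.continuousOn isOpen_univ hg
    exact continuousOn_univ.mp h
  have hsubb : ∀ y, g (A *ᵥ xb - b) + ub ⬝ᵥ (y - (A *ᵥ xb - b)) ≤ g y := by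
    intro y
    have hLHS : Tendsto (fun k => g (v k) + u (k+1) ⬝ᵥ (y - v k)) atTop
        (𝓝 (g (A *ᵥ xb - b) + ub ⬝ᵥ (y - (A *ᵥ xb - b)))) :=
      ((hgc.tendsto _).comp hvlim).add
        (tendsto_dot huconv1 (tendsto_const_nhds.sub hvlim))
    exact le_of_tendsto hLHS (Filter.Eventually.of_forall (fun k => hsubg k y))
  have hprimal : ∀ y, g (A *ᵥ xb - b) ≤ g (A *ᵥ y - b) := by
    intro y
    have h := hsubb (A *ᵥ y - b)
    have h2 : A *ᵥ y - b - (A *ᵥ xb - b) = A *ᵥ (y - xb) := by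
      rw [Matrix.mulVec_sub]
      abel
    have h3 : ub ⬝ᵥ (A *ᵥ y - b - (A *ᵥ xb - b)) = 0 := by
      rw [h2, ← dot_mulVec_transpose, hAtub, zero_dotProduct]
    rw [h3] at h
    linarith
  exact ⟨xb, ub, hprimal, hAtub, hsubb, hxconv, huconv⟩
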